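/- Fix f > 0 and α > 0, and define T : ℝ → ℝ on the set of t with t ≠ (2k+1)π/f by T(t) = (2/f)·arctan(α·tan(ft/2)) + χ(t), where χ(t) = 2πk/f for t ∈ ((2k−1)π/f, (2k+1)π/f), k ∈ ℤ. Then T extends to a continuous, strictly increasing bijection of ℝ onto ℝ by setting T((2k+1)π/f) = (2k+1)π/f, and this extension is continuously differentiable with T'(t) = α(1 + tan²(ft/2))/(1 + α²tan²(ft/2)) > 0 at points where tan(ft/2) is defined and T'((2k+1)π/f) = 1/α. -/

import Mathlib

open Real

private theorem key_arctan (α : ℝ) (hα : 0 < α) (ψ : ℝ) (h1 : -(π/2) < ψ) (h2 : ψ < π/2) :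
    Real.arctan (α * Real.tan ψ) = ψ + Real.arctan ((α - 1) * Real.sin (2*ψ) /
      ((1 + α) + (1 - α) * Real.cos (2*ψ))) := by
  have hc : 0 < Real.cos ψ := Real.cos_pos_of_mem_Ioo ⟨h1, h2⟩
  set u := Real.tan ψ with hu
  have hmul : (α * u) * (-u) < 1 := by nlinarith [sq_nonneg u]
  have H := Real.arctan_add hmul
  rw [Real.arctan_neg, Real.arctan_tan h1 h2] at H
  have hd : 0 < (1 + α) + (1 - α) * Real.cos (2*ψ) := by
    have := Real.neg_one_le_cos (2*ψ)
    have := Real.cos_le_one (2*ψ)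
    rcases le_total α 1 with h | h
    · nlinarith
    · nlinarith
  have harg : (α * u + -u) / (1 - (α * u) * (-u)) =
      (α - 1) * Real.sin (2*ψ) / ((1 + α) + (1 - α) * Real.cos (2*ψ)) := by
    have htc : u * Real.cos ψ = Real.sin ψ := Real.tan_mul_cos (ne_of_gt hc)
    have hpyth : Real.sin ψ ^ 2 + Real.cos ψ ^ 2 = 1 := Real.sin_sq_add_cos_sq ψ
    have hb : (0:ℝ) < 1 - (α * u) * (-u) := by nlinarith [sq_nonneg u]
    rw [Real.sin_two_mul, Real.cos_two_mul, div_eq_div_iff (ne_of_gt hb) (by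
      rw [Real.cos_two_mul] at hd; exact ne_of_gt hd)]
    linear_combination (2*(α-1)*(Real.cos ψ + α*u^2*Real.cos ψ - 2*α*u*Real.sin ψ
      - α*u*(u*Real.cos ψ - Real.sin ψ))) * htc + (-2*α*(α-1)*u) * hpyth
  rw [harg] at H
  linarith

/-- The time reparameterization T(t) = (2/f)·arctan(α·tan(ft/2)) + χ(t),
extended by T((2k+1)π/f) = (2k+1)π/f, is a continuously differentiable,
strictly increasing bijection of ℝ onto ℝ, with the stated derivative. -/
theorem time_map_is_C1_increasing_bijection
    (f α : ℝ) (hf : 0 < f) (hα : 0 < α)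
    (χ T : ℝ → ℝ)
    (hχ : ∀ k : ℤ, ∀ t ∈ Set.Ioo ((2 * (k : ℝ) - 1) * Real.pi / f)
        ((2 * (k : ℝ) + 1) * Real.pi / f), χ t = 2 * Real.pi * (k : ℝ) / f)
    (hT : ∀ t : ℝ, (∀ k : ℤ, t ≠ (2 * (k : ℝ) + 1) * Real.pi / f) →
        T t = (2 / f) * Real.arctan (α * Real.tan (f * t / 2)) + χ t)
    (hTodd : ∀ k : ℤ, T ((2 * (k : ℝ) + 1) * Real.pi / f)
        = (2 * (k : ℝ) + 1) * Real.pi / f) :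
    Continuous T ∧ StrictMono T ∧ Function.Bijective T ∧ ContDiff ℝ 1 T ∧
    (∀ t : ℝ, (∀ k : ℤ, t ≠ (2 * (k : ℝ) + 1) * Real.pi / f) →
      HasDerivAt T (α * (1 + Real.tan (f * t / 2) ^ 2)
          / (1 + α ^ 2 * Real.tan (f * t / 2) ^ 2)) t ∧
      0 < α * (1 + Real.tan (f * t / 2) ^ 2)
          / (1 + α ^ 2 * Real.tan (f * t / 2) ^ 2)) ∧
    (∀ k : ℤ, HasDerivAt T (1 / α) ((2 * (k : ℝ) + 1) * Real.pi / f)) := by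
  have hπ := Real.pi_pos
  set G : ℝ → ℝ := fun t => t + (2 / f) * Real.arctan ((α - 1) * Real.sin (f * t) /
      ((1 + α) + (1 - α) * Real.cos (f * t))) with hGdef
  -- denominators positive
  have hden : ∀ x : ℝ, 0 < (1 + α) + (1 - α) * Real.cos x := by
    intro x
    have := Real.neg_one_le_cos x
    have := Real.cos_le_one x
    rcases le_total α 1 with h | h
    · nlinarith
    · nlinarith
  have hden2 : ∀ x : ℝ, 0 < (1 + α^2) + (1 - α^2) * Real.cos x := by
    intro x
    have h1 := Real.neg_one_le_cos x
    have h2 := Real.cos_le_one x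
    rcases le_total α 1 with h | h
    · nlinarith [mul_nonneg (by nlinarith : (0:ℝ) ≤ 1 - α^2) (by linarith : (0:ℝ) ≤ Real.cos x + 1)]
    · nlinarith [mul_nonneg (by nlinarith : (0:ℝ) ≤ α^2 - 1) (by linarith : (0:ℝ) ≤ 1 - Real.cos x)]
  -- T = G
  have hTG : T = G := by
    funext t
    by_cases hodd : ∃ k : ℤ, t = (2 * (k : ℝ) + 1) * Real.pi / f
    · obtain ⟨k, rfl⟩ := hodd
      rw [hTodd k]
      have hft : f * ((2 * (k : ℝ) + 1) * Real.pi / f) = (2 * (k:ℝ) + 1) * Real.pi := by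
        field_simp
      have hs0 : Real.sin ((2 * (k:ℝ) + 1) * Real.pi) = 0 := by
        have : (2 * (k:ℝ) + 1) * Real.pi = ((2*k+1 : ℤ) : ℝ) * Real.pi := by push_cast; ring
        rw [this, Real.sin_int_mul_pi]
      simp [hGdef, hft, hs0]
    · push_neg at hodd
      set k : ℤ := ⌊f * t / (2*Real.pi) + 1/2⌋ with hk
      have h2π : (0:ℝ) < 2 * Real.pi := by linarith
      have hfl : (k:ℝ) ≤ f * t / (2*Real.pi) + 1/2 := Int.floor_le _
      have hfu : f * t / (2*Real.pi) + 1/2 < (k:ℝ) + 1 := Int.lt_floor_add_one _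
      have hub : t < (2 * (k:ℝ) + 1) * Real.pi / f := by
        rw [lt_div_iff₀ hf]
        have : f * t < (2 * (k:ℝ) + 1) * Real.pi := by
          have := (div_lt_iff₀ h2π).mp (by linarith : f * t / (2*Real.pi) < (k:ℝ) + 1/2)
          linarith
        linarith [this]
      have hlb : (2 * (k:ℝ) - 1) * Real.pi / f < t := by
        have hle : (2 * (k:ℝ) - 1) * Real.pi ≤ f * t := by
          have := (le_div_iff₀ h2π).mp (by linarith : (k:ℝ) - 1/2 ≤ f * t / (2*Real.pi))
          linarith
        rcases lt_or_eq_of_le hle with h | h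
        · rw [div_lt_iff₀ hf]; linarith
        · exfalso
          apply hodd (k - 1)
          push_cast
          rw [eq_div_iff (ne_of_gt hf)]
          linarith
      -- ψ = f t/2 - kπ ∈ (-π/2, π/2)
      set ψ : ℝ := f * t / 2 - (k:ℝ) * Real.pi with hψ
      have hψ1 : -(Real.pi/2) < ψ := by
        have := (div_lt_iff₀ hf).mp hlb
        simp only [hψ]; nlinarith
      have hψ2 : ψ < Real.pi/2 := by
        have := (lt_div_iff₀ hf).mp hub
        simp only [hψ]; nlinarith
      have htan : Real.tan (f * t / 2) = Real.tan ψ := by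
        have : f * t / 2 = ψ + (k:ℝ) * Real.pi := by simp [hψ]
        rw [this, Real.tan_add_int_mul_pi]
      have hft2 : f * t = 2*ψ + (k:ℝ) * (2 * Real.pi) := by simp [hψ]; ring
      have hsin : Real.sin (f * t) = Real.sin (2*ψ) := by
        rw [hft2, Real.sin_add_int_mul_two_pi]
      have hcos : Real.cos (f * t) = Real.cos (2*ψ) := by
        rw [hft2, Real.cos_add_int_mul_two_pi]
      rw [hT t hodd, hχ k t ⟨hlb, hub⟩, htan]
      simp only [hGdef, hsin, hcos]
      rw [key_arctan α hα ψ hψ1 hψ2]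
      have hψt : ψ = f * t / 2 - (k:ℝ) * Real.pi := rfl
      field_simp
      ring
  -- the global derivative of G
  have hG' : ∀ t : ℝ, HasDerivAt G
      (2 * α / ((1 + α^2) + (1 - α^2) * Real.cos (f * t))) t := by
    intro t
    have hid : HasDerivAt (fun t : ℝ => f * t) f t := by
      simpa using (hasDerivAt_id t).const_mul f
    have hs : HasDerivAt (fun t : ℝ => Real.sin (f * t)) (Real.cos (f * t) * f) t := hid.sin
    have hc : HasDerivAt (fun t : ℝ => Real.cos (f * t)) (-Real.sin (f * t) * f) t := hid.cos
    have hnum : HasDerivAt (fun t : ℝ => (α - 1) * Real.sin (f * t))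
        ((α - 1) * (Real.cos (f * t) * f)) t := hs.const_mul _
    have hden' : HasDerivAt (fun t : ℝ => (1 + α) + (1 - α) * Real.cos (f * t))
        ((1 - α) * (-Real.sin (f * t) * f)) t := by
      simpa using ((hc.const_mul (1 - α)).const_add (1 + α))
    have hq : HasDerivAt (fun t : ℝ => (α - 1) * Real.sin (f * t) /
        ((1 + α) + (1 - α) * Real.cos (f * t)))
        (((α - 1) * (Real.cos (f * t) * f) * ((1 + α) + (1 - α) * Real.cos (f * t)) -
          (α - 1) * Real.sin (f * t) * ((1 - α) * (-Real.sin (f * t) * f))) /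
          ((1 + α) + (1 - α) * Real.cos (f * t))^2) t :=
      hnum.div hden' (ne_of_gt (hden (f * t)))
    have harc := hq.arctan
    have hfinal : HasDerivAt G (1 + 2 / f *
        (1 / (1 + ((α - 1) * Real.sin (f * t) / ((1 + α) + (1 - α) * Real.cos (f * t)))^2) *
        (((α - 1) * (Real.cos (f * t) * f) * ((1 + α) + (1 - α) * Real.cos (f * t)) -
          (α - 1) * Real.sin (f * t) * ((1 - α) * (-Real.sin (f * t) * f))) /
          ((1 + α) + (1 - α) * Real.cos (f * t))^2))) t :=
      (hasDerivAt_id t).add (harc.const_mul (2 / f))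
    convert hfinal using 1
    have hD := hden (f * t)
    have hD2 := hden2 (f * t)
    have hpyth : Real.sin (f*t) ^ 2 + Real.cos (f*t) ^ 2 = 1 := Real.sin_sq_add_cos_sq _
    set s := Real.sin (f * t)
    set c := Real.cos (f * t)
    have e1 : 1 + ((α - 1) * s / (1 + α + (1 - α) * c)) ^ 2
        = 2 * (1 + α ^ 2 + (1 - α ^ 2) * c) / (1 + α + (1 - α) * c) ^ 2 := by
      field_simp
      linear_combination (α - 1) ^ 2 * hpyth
    have e2 : (α - 1) * (c * f) * (1 + α + (1 - α) * c) - (α - 1) * s * ((1 - α) * (-s * f))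
        = (α - 1) * f * ((1 + α) * c + (1 - α)) := by
      linear_combination (-(α - 1) ^ 2 * f) * hpyth
    rw [e2, e1]
    field_simp
    have hD1 : 1 + α + c * (1 - α) ≠ 0 := by nlinarith
    field_simp
    ring
  -- basic consequences
  have hdiff : Differentiable ℝ G := fun t => (hG' t).differentiableAt
  have hderiv : deriv G = fun t => 2 * α / ((1 + α^2) + (1 - α^2) * Real.cos (f * t)) :=
    funext fun t => (hG' t).deriv
  have hpos : ∀ t : ℝ, 0 < 2 * α / ((1 + α^2) + (1 - α^2) * Real.cos (f * t)) :=
    fun t => div_pos (by linarith) (hden2 (f*t))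
  have hmono : StrictMono G := strictMono_of_deriv_pos (fun t => by
    rw [hderiv]; exact hpos t)
  have hcont : Continuous G := hdiff.continuous
  have hsurj : Function.Surjective G := by
    intro y
    set a : ℝ := y - 2 / f * (Real.pi / 2) with ha
    set b : ℝ := y + 2 / f * (Real.pi / 2) with hb
    have h2f : (0:ℝ) < 2 / f := by positivity
    have hGa : G a ≤ y := by
      have h1 := Real.arctan_lt_pi_div_two ((α - 1) * Real.sin (f * a) /
        ((1 + α) + (1 - α) * Real.cos (f * a)))
      have := mul_lt_mul_of_pos_left h1 h2f
      simp only [hGdef, ha]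
      nlinarith
    have hGb : y ≤ G b := by
      have h1 := Real.neg_pi_div_two_lt_arctan ((α - 1) * Real.sin (f * b) /
        ((1 + α) + (1 - α) * Real.cos (f * b)))
      have := mul_lt_mul_of_pos_left h1 h2f
      simp only [hGdef, hb]
      nlinarith
    have hab : a ≤ b := by simp only [ha, hb]; nlinarith [Real.pi_pos]
    have := intermediate_value_Icc hab hcont.continuousOn
    obtain ⟨z, _, hz⟩ := this ⟨hGa, hGb⟩
    exact ⟨z, hz⟩
  have hC1 : ContDiff ℝ 1 G := by
    rw [contDiff_one_iff_deriv]
    refine ⟨hdiff, ?_⟩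
    rw [hderiv]
    have : Continuous fun t : ℝ => (1 + α^2) + (1 - α^2) * Real.cos (f * t) :=
      continuous_const.add (continuous_const.mul (Real.continuous_cos.comp
        (continuous_const.mul continuous_id)))
    exact continuous_const.div this (fun t => (hden2 (f*t)).ne')
  subst hTG
  refine ⟨hcont, hmono, ⟨hmono.injective, hsurj⟩, hC1, ?_, ?_⟩
  · intro t ht
    have hcth : Real.cos (f * t / 2) ≠ 0 := by
      intro h0
      obtain ⟨k, hk⟩ := Real.cos_eq_zero_iff.mp h0
      exact ht k (by rw [eq_div_iff (ne_of_gt hf)]; linarith [hk])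
    have h2c : Real.cos (f * t) = 2 * Real.cos (f * t / 2)^2 - 1 := by
      have h := Real.cos_two_mul (f * t / 2)
      rwa [show 2 * (f * t / 2) = f * t by ring] at h
    have hpyth : Real.sin (f*t/2) ^ 2 + Real.cos (f*t/2) ^ 2 = 1 := Real.sin_sq_add_cos_sq _
    have hc2pos : 0 < Real.cos (f*t/2)^2 := pow_two_pos_of_ne_zero hcth
    have hq2 : 0 < Real.cos (f*t/2)^2 + α^2 * Real.sin (f*t/2)^2 := by positivity
    have heq : α * (1 + Real.tan (f * t / 2) ^ 2) / (1 + α ^ 2 * Real.tan (f * t / 2) ^ 2)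
        = 2 * α / ((1 + α^2) + (1 - α^2) * Real.cos (f * t)) := by
      have hd2' : (0:ℝ) < 1 + α^2 + (1 - α^2) * (2 * Real.cos (f * t / 2)^2 - 1) := by
        rw [← h2c]; exact hden2 (f*t)
      rw [Real.tan_eq_sin_div_cos, h2c]
      rw [div_eq_div_iff (by positivity) (ne_of_gt hd2')]
      field_simp
      linear_combination (2*Real.cos (f*t/2)^2*(1-α^2)) * hpyth
    rw [heq]
    exact ⟨hG' t, hpos t⟩
  · intro k
    have hck : Real.cos (f * ((2 * (k:ℝ) + 1) * Real.pi / f)) = -1 := by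
      rw [show f * ((2 * (k:ℝ) + 1) * Real.pi / f) = (k:ℝ) * (2 * Real.pi) + Real.pi by
        field_simp]
      exact_mod_cast Real.cos_int_mul_two_pi_add_pi k
    have := hG' ((2 * (k:ℝ) + 1) * Real.pi / f)
    rw [hck] at this
    rwa [show 2 * α / (1 + α^2 + (1 - α^2) * (-1)) = 1 / α by
      rw [show 1 + α^2 + (1 - α^2) * (-1:ℝ) = 2*α^2 by ring,
        div_eq_div_iff (by positivity) (ne_of_gt hα)]; ring] at this
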